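/- For the path graph on vertex set {-k,...,k} with double-symmetric positive edge weights and potential u ≥ 0 at the zero vertex, a positive ground state eigenvector u_0 of H = L_γ + u δ_0 is symmetric: u_0(v) = u_0(-v) for all v ∈ {-k,...,k}. -/

import Mathlib

open Filter Real Matrix

/-- Real version of the weighted Laplacian plus potential `u δ₀` on the path graph with
vertex set `{-k, …, k}` (encoded as `Fin (2*k+1)`, the vertex of index `i` being `i - k`):
`(H f)(v) = ∑_{w : |v-w|=1} γ v w (f v - f w) + u · [v = 0] · f v`. -/
noncomputable def pathHR (k : ℕ) (γ : ℤ → ℤ → ℝ) (u : ℝ) :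
    Matrix (Fin (2 * k + 1)) (Fin (2 * k + 1)) ℝ := fun i j =>
  if i = j then
    ((∑ w : Fin (2 * k + 1),
        if |((i : ℤ) - k) - ((w : ℤ) - k)| = 1 then γ ((i : ℤ) - k) ((w : ℤ) - k) else 0)
      + if ((i : ℤ) - k) = 0 then u else 0)
  else if |((i : ℤ) - k) - ((j : ℤ) - k)| = 1 then -γ ((i : ℤ) - k) ((j : ℤ) - k) else 0

/-- The operator `H = L_γ + u δ₀` as a complex matrix on `ℂ^{2k+1}`. -/
noncomputable def pathH (k : ℕ) (γ : ℤ → ℤ → ℝ) (u : ℝ) :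
    Matrix (Fin (2 * k + 1)) (Fin (2 * k + 1)) ℂ :=
  (pathHR k γ u).map (fun x => (x : ℂ))

lemma pathH_isHermitian (k : ℕ) (γ : ℤ → ℤ → ℝ) (u : ℝ)
    (hsym : ∀ v w : ℤ, γ v w = γ w v) : (pathH k γ u).IsHermitian := by
  have hAR : (pathHR k γ u)ᵀ = pathHR k γ u := by
    ext i j
    unfold pathHR
    by_cases h : i = j
    · subst h; rfl
    · change (if j = i then _ else _) = (if i = j then _ else _)
      simp only [if_neg h, if_neg (Ne.symm h)]
      rw [abs_sub_comm, hsym]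
  unfold Matrix.IsHermitian pathH
  rw [← Matrix.conjTranspose_map _ (by intro x; simp [Complex.conj_ofReal]),
    show (pathHR k γ u)ᴴ = (pathHR k γ u)ᵀ from rfl, hAR]

/-- Sorted (increasing) enumeration of the eigenvalues of a Hermitian matrix. -/
noncomputable def sortedEig {n : ℕ} {A : Matrix (Fin n) (Fin n) ℂ} (hA : A.IsHermitian) :
    Fin n → ℝ :=
  hA.eigenvalues ∘ Tuple.sort hA.eigenvalues

lemma pathHR_offdiag (k : ℕ) (γ : ℤ → ℤ → ℝ) (u : ℝ) (i j : Fin (2*k+1)) (hij : i ≠ j) :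
    pathHR k γ u i j =
      if |((i : ℤ)) - (j : ℤ)| = 1 then -γ ((i : ℤ) - k) ((j : ℤ) - k) else 0 := by
  unfold pathHR
  rw [if_neg hij, sub_sub_sub_cancel_right]

lemma abs_eq_one_iff' (a b : ℤ) : |a - b| = 1 ↔ (a - b = 1 ∨ a - b = -1) :=
  abs_eq (by norm_num)

lemma pathHR_row (k : ℕ) (γ : ℤ → ℤ → ℝ) (u : ℝ) (i : Fin (2*k+1)) (h : Fin (2*k+1) → ℝ) :
    ∑ j, pathHR k γ u i j * h j
      = pathHR k γ u i i * h i
        + (if hc : (i:ℕ)+1 < 2*k+1 then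
            pathHR k γ u i ⟨(i:ℕ)+1, hc⟩ * h ⟨(i:ℕ)+1, hc⟩ else 0)
        + (if _ : 0 < (i:ℕ) then
            pathHR k γ u i ⟨(i:ℕ)-1, lt_of_le_of_lt (Nat.sub_le _ _) i.isLt⟩ *
              h ⟨(i:ℕ)-1, lt_of_le_of_lt (Nat.sub_le _ _) i.isLt⟩ else 0) := by
  have key : ∀ j : Fin (2*k+1), pathHR k γ u i j * h j =
      (if j = i then pathHR k γ u i i * h i else 0)
      + (if (j:ℕ) = (i:ℕ)+1 then pathHR k γ u i j * h j else 0)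
      + (if (j:ℕ)+1 = (i:ℕ) then pathHR k γ u i j * h j else 0) := by
    intro j
    by_cases h1 : j = i
    · subst h1
      rw [if_pos rfl, if_neg (by omega), if_neg (by omega)]
      ring
    · rw [if_neg h1]
      by_cases h2 : (j:ℕ) = (i:ℕ)+1
      · rw [if_pos h2, if_neg (by omega)]; ring
      · rw [if_neg h2]
        by_cases h3 : (j:ℕ)+1 = (i:ℕ)
        · rw [if_pos h3]; ring
        · rw [if_neg h3]
          have hz : pathHR k γ u i j = 0 := by
            rw [pathHR_offdiag k γ u i j (Ne.symm h1), if_neg]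
            rw [abs_eq_one_iff']
            have : (i : ℤ) = ((i:ℕ) : ℤ) := rfl
            have : (j : ℤ) = ((j:ℕ) : ℤ) := rfl
            omega
          rw [hz]; ring
  rw [Finset.sum_congr rfl (fun j _ => key j)]
  rw [Finset.sum_add_distrib, Finset.sum_add_distrib]
  congr 1
  · congr 1
    · exact Finset.sum_ite_eq' _ _ _ |>.trans (by rw [if_pos (Finset.mem_univ i)])
    · by_cases hc : (i:ℕ)+1 < 2*k+1
      · rw [dif_pos hc]
        have hcond : ∀ j : Fin (2*k+1), ((j:ℕ) = (i:ℕ)+1) ↔ j = ⟨(i:ℕ)+1, hc⟩ := by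
          intro j; rw [Fin.ext_iff]
        rw [Finset.sum_congr rfl (fun j _ => by rw [if_congr (hcond j) rfl rfl])]
        exact Finset.sum_ite_eq' _ _ _ |>.trans (by rw [if_pos (Finset.mem_univ _)])
      · rw [dif_neg hc]
        apply Finset.sum_eq_zero
        intro j _
        rw [if_neg (by have := j.isLt; omega)]
  · by_cases hc : 0 < (i:ℕ)
    · rw [dif_pos hc]
      have hcond : ∀ j : Fin (2*k+1), ((j:ℕ)+1 = (i:ℕ)) ↔
          j = ⟨(i:ℕ)-1, lt_of_le_of_lt (Nat.sub_le _ _) i.isLt⟩ := by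
        intro j; rw [Fin.ext_iff]; simp; omega
      rw [Finset.sum_congr rfl (fun j _ => by rw [if_congr (hcond j) rfl rfl])]
      exact Finset.sum_ite_eq' _ _ _ |>.trans (by rw [if_pos (Finset.mem_univ _)])
    · rw [dif_neg hc]
      apply Finset.sum_eq_zero
      intro j _
      rw [if_neg (by omega)]

lemma rev_int (k : ℕ) (i : Fin (2*k+1)) : ((i.rev : Fin (2*k+1)) : ℤ) - k = -(((i : ℤ)) - k) := by
  have h1 : ((i.rev : ℤ)) = (((2*k+1) - ((i:ℕ)+1) : ℕ) : ℤ) := by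
    rw [show ((i.rev : ℤ)) = ((i.rev : ℕ) : ℤ) from rfl, Fin.val_rev]
  have h3 := i.isLt
  have h4 : ((i : ℤ)) = ((i:ℕ):ℤ) := rfl
  omega

lemma pathHR_rev (k : ℕ) (γ : ℤ → ℤ → ℝ) (u : ℝ)
    (hsym2 : ∀ v w : ℤ, γ v w = γ (-v) (-w)) (i j : Fin (2*k+1)) :
    pathHR k γ u i.rev j.rev = pathHR k γ u i j := by
  unfold pathHR
  by_cases h : i = j
  · subst h
    rw [if_pos rfl, if_pos rfl]
    congr 1
    · apply Fintype.sum_bijective Fin.rev Fin.rev_bijective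
      intro w
      rw [rev_int, rev_int]
      rw [show -((i:ℤ)-(k:ℤ)) - ((w:ℤ)-(k:ℤ)) = -((((i:ℤ))-(k:ℤ)) - -(((w:ℤ))-(k:ℤ))) by ring,
        abs_neg, hsym2 (((i:ℤ))-(k:ℤ)) (-(((w:ℤ))-(k:ℤ))), neg_neg]
    · simp only [rev_int, neg_eq_zero]
  · rw [if_neg h, if_neg (fun hc => h (Fin.rev_injective hc))]
    rw [rev_int, rev_int]
    rw [show -((i:ℤ)-(k:ℤ)) - -((j:ℤ)-(k:ℤ)) = -((((i:ℤ))-(k:ℤ)) - (((j:ℤ))-(k:ℤ))) by ring,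
      abs_neg, ← hsym2]

/-- A positive ground state eigenvector of `H = L_γ + u δ₀` with double-symmetric weights
is symmetric: `u₀(v) = u₀(-v)` (on `Fin (2k+1)`, negation of the vertex is `Fin.rev`). -/
theorem ground_state_symmetric (k : ℕ) (γ : ℤ → ℤ → ℝ) (u : ℝ) (hu : 0 ≤ u)
    (hpos : ∀ v w : ℤ, |v - w| = 1 → 0 < γ v w)
    (hsym : ∀ v w : ℤ, γ v w = γ w v)
    (hsym2 : ∀ v w : ℤ, γ v w = γ (-v) (-w))
    (u₀ : Fin (2 * k + 1) → ℝ) (hposgs : ∀ i, 0 < u₀ i)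
    (heig : (pathH k γ u).mulVec (fun i => (u₀ i : ℂ)) =
      ((sortedEig (pathH_isHermitian k γ u hsym) ⟨0, by omega⟩ : ℝ) : ℂ) •
        (fun i => (u₀ i : ℂ))) :
    ∀ i : Fin (2 * k + 1), u₀ i = u₀ i.rev := by
  intro i
  set lam : ℝ := sortedEig (pathH_isHermitian k γ u hsym) ⟨0, by omega⟩ with hlam
  have hf : ∀ i, ∑ j, pathHR k γ u i j * u₀ j = lam * u₀ i := by
    intro i
    have h := congrFun heig i
    simp only [pathH, Matrix.mulVec, dotProduct, Matrix.map_apply, Pi.smul_apply,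
      smul_eq_mul] at h
    exact_mod_cast h
  set g : Fin (2*k+1) → ℝ := fun j => u₀ j.rev with hgdef
  have hg : ∀ i, ∑ j, pathHR k γ u i j * g j = lam * g i := by
    intro i
    have hsum : ∑ j, pathHR k γ u i.rev j * u₀ j = ∑ j, pathHR k γ u i j * g j := by
      apply Fintype.sum_bijective Fin.rev Fin.rev_bijective
      intro x
      have : pathHR k γ u i.rev x = pathHR k γ u i x.rev := by
        rw [← pathHR_rev k γ u hsym2 i.rev x, Fin.rev_rev]
      rw [this]
      simp only [hgdef, Fin.rev_rev]
    rw [← hsum, hf i.rev]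
  set c : ℝ := g ⟨0, by omega⟩ / u₀ ⟨0, by omega⟩ with hcdef
  have hprop : ∀ m, ∀ hm : m < 2*k+1, g ⟨m, hm⟩ = c * u₀ ⟨m, hm⟩ := by
    intro m
    induction m using Nat.strong_induction_on with
    | _ m ih =>
      intro hm
      match m, hm, ih with
      | 0, hm, ih =>
        exact (div_mul_cancel₀ _ (ne_of_gt (hposgs _))).symm
      | m'+1, hm, ih =>
        have hm' : m' < 2*k+1 := by omega
        set i' : Fin (2*k+1) := ⟨m', hm'⟩ with hi'
        have hrow_f := (pathHR_row k γ u i' u₀).symm.trans (hf i')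
        have hrow_g := (pathHR_row k γ u i' g).symm.trans (hg i')
        have hrc : (i':ℕ)+1 < 2*k+1 := hm
        rw [dif_pos hrc] at hrow_f hrow_g
        have hgi : g i' = c * u₀ i' := ih m' (Nat.lt_succ_self m') hm'
        have hAne : pathHR k γ u i' ⟨(i':ℕ)+1, hrc⟩ ≠ 0 := by
          have hne : i' ≠ ⟨(i':ℕ)+1, hrc⟩ := by
            intro hcc
            have := congrArg Fin.val hcc
            simp at this
          rw [pathHR_offdiag k γ u i' _ hne]
          have hcast : ((⟨(i':ℕ)+1, hrc⟩ : Fin (2*k+1)) : ℤ) = ((i':ℕ):ℤ)+1 := by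
            push_cast
            rfl
          have hcond : |((i' : ℤ)) - ((⟨(i':ℕ)+1, hrc⟩ : Fin (2*k+1)) : ℤ)| = 1 := by
            rw [hcast, show ((i':ℤ)) - (((i':ℕ):ℤ)+1) = -1 from by
              rw [show ((i':ℤ)) = ((i':ℕ):ℤ) from rfl]; ring]
            norm_num
          rw [if_pos hcond]
          refine neg_ne_zero.mpr (ne_of_gt (hpos _ _ ?_))
          rw [sub_sub_sub_cancel_right]
          exact hcond
        have hkey : pathHR k γ u i' ⟨(i':ℕ)+1, hrc⟩ * g ⟨(i':ℕ)+1, hrc⟩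
            = pathHR k γ u i' ⟨(i':ℕ)+1, hrc⟩ * (c * u₀ ⟨(i':ℕ)+1, hrc⟩) := by
          by_cases h0 : 0 < (i':ℕ)
          · rw [dif_pos h0] at hrow_f hrow_g
            have hleft : g ⟨(i':ℕ)-1, lt_of_le_of_lt (Nat.sub_le _ _) i'.isLt⟩
                = c * u₀ ⟨(i':ℕ)-1, lt_of_le_of_lt (Nat.sub_le _ _) i'.isLt⟩ :=
              ih ((i':ℕ)-1) (by have : (i':ℕ) = m' := rfl; omega) _
            rw [hgi, hleft] at hrow_g
            linear_combination hrow_g - c * hrow_f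
          · rw [dif_neg h0] at hrow_f hrow_g
            rw [hgi] at hrow_g
            linear_combination hrow_g - c * hrow_f
        exact mul_left_cancel₀ hAne hkey
  have hc2 : ∀ j : Fin (2*k+1), u₀ j.rev = c * u₀ j := by
    intro j
    have := hprop j.val j.isLt
    simpa [hgdef] using this
  have hcpos : 0 < c := div_pos (hposgs _) (hposgs _)
  have hcsq : c * c = 1 := by
    have h2 := hc2 (Fin.rev i)
    rw [Fin.rev_rev] at h2
    have h3 : u₀ i = c * (c * u₀ i) := by conv_lhs => rw [h2, hc2 i]
    have h4 := hposgs i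
    nlinarith
  have hc1 : c = 1 := by nlinarith
  rw [hc2 i, hc1, one_mul]
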